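/- Let H be a complex Hilbert space, S ∈ B(H), and P a rank-one projection. Suppose φ(P)S = x⊗x, Sφ(P) = y⊗y and φ(P)² = z⊗z for unit vectors x, y, z and some operator φ(P), where S² = I. Then Sy = α y for some α ∈ {1, −1}, and φ(P) = α (y ⊗ y); in particular φ(P) is a rank-one projection or its negative. -/

import Mathlib

/-- If `S² = I` and `T` satisfies `T S = x⊗x`, `S T = y⊗y`, `T² = z⊗z` with unit
vectors `x, y, z`, then `S y = α • y` with `α ∈ {1, -1}` and `T = α • (y ⊗ y)`;
in particular `T` is a rank-one projection or its negative. -/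
theorem stmt12 {H : Type*} [NormedAddCommGroup H] [InnerProductSpace ℂ H] [CompleteSpace H]
    (S T : H →L[ℂ] H) (hS : S ∘L S = 1)
    (x y z : H) (hx : ‖x‖ = 1) (hy : ‖y‖ = 1) (hz : ‖z‖ = 1)
    (h1 : T ∘L S = (innerSL ℂ x).smulRight x)
    (h2 : S ∘L T = (innerSL ℂ y).smulRight y)
    (h3 : T ∘L T = (innerSL ℂ z).smulRight z) :
    ∃ α : ℂ, (α = 1 ∨ α = -1) ∧ S y = α • y ∧ T = α • (innerSL ℂ y).smulRight y := by
  have hSS : ∀ w : H, S (S w) = w := by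
    intro w
    have h := DFunLike.congr_fun hS w
    simpa using h
  have hy1 : (inner ℂ y y : ℂ) = 1 := by
    rw [inner_self_eq_norm_sq_to_K, hy]; norm_num
  have hz1 : (inner ℂ z z : ℂ) = 1 := by
    rw [inner_self_eq_norm_sq_to_K, hz]; norm_num
  have hy0 : y ≠ 0 := by
    intro h; rw [h, norm_zero] at hy; norm_num at hy
  have hz0 : z ≠ 0 := by
    intro h; rw [h, norm_zero] at hz; norm_num at hz
  have hT : ∀ w, T w = (inner ℂ y w : ℂ) • S y := by
    intro w
    have h := DFunLike.congr_fun h2 w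
    simp only [ContinuousLinearMap.coe_comp', Function.comp_apply,
      ContinuousLinearMap.smulRight_apply, innerSL_apply_apply] at h
    calc T w = S (S (T w)) := (hSS _).symm
      _ = S ((inner ℂ y w : ℂ) • y) := by rw [h]
      _ = (inner ℂ y w : ℂ) • S y := map_smul S _ _
  set β : ℂ := inner ℂ y (S y) with hβ
  set d : ℂ := inner ℂ z y with hd
  have hA : β • S y = d • z := by
    have h := DFunLike.congr_fun h3 y
    simp only [ContinuousLinearMap.coe_comp', Function.comp_apply,
      ContinuousLinearMap.smulRight_apply, innerSL_apply_apply] at h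
    rw [hT, hT, hy1, one_smul] at h
    exact h
  have hB : ((starRingEnd ℂ) d * β) • S y = z := by
    have h := DFunLike.congr_fun h3 z
    simp only [ContinuousLinearMap.coe_comp', Function.comp_apply,
      ContinuousLinearMap.smulRight_apply, innerSL_apply_apply] at h
    have hyz : (inner ℂ y z : ℂ) = (starRingEnd ℂ) d := by
      rw [hd, ← inner_conj_symm]
    rw [hT, hT, hz1, one_smul, inner_smul_right, hyz] at h
    exact h
  have hSy0 : S y ≠ 0 := by
    intro h
    have := hSS y
    rw [h, map_zero] at this
    exact hy0 this.symm
  have hdβ0 : (starRingEnd ℂ) d * β ≠ 0 := by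
    intro h
    rw [h, zero_smul] at hB
    exact hz0 hB.symm
  have hd0 : d ≠ 0 := fun h => hdβ0 (by rw [h, map_zero, zero_mul])
  have hβ0 : β ≠ 0 := fun h => hdβ0 (by rw [h, mul_zero])
  have hdd : d * (starRingEnd ℂ) d = 1 := by
    have h2 : (β - d * ((starRingEnd ℂ) d * β)) • S y = 0 := by
      rw [sub_smul, mul_smul, hB, ← hA, sub_self]
    rcases smul_eq_zero.mp h2 with h3 | h3
    · have h5 : β * (1 - d * (starRingEnd ℂ) d) = 0 := by linear_combination h3
      rcases mul_eq_zero.mp h5 with h4 | h4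
      · exact absurd h4 hβ0
      · linear_combination -h4
    · exact absurd h3 hSy0
  have hzy : z = (starRingEnd ℂ) d • y := by
    have h : (inner ℂ (z - (starRingEnd ℂ) d • y) (z - (starRingEnd ℂ) d • y) : ℂ) = 0 := by
      have hyz : (inner ℂ y z : ℂ) = (starRingEnd ℂ) d := by
        rw [hd, ← inner_conj_symm]
      have hcc : (starRingEnd ℂ) ((starRingEnd ℂ) d) = d := Complex.conj_conj d
      simp only [inner_sub_left, inner_sub_right, inner_smul_left, inner_smul_right,
        hy1, hz1, ← hd, hyz, hcc]
      ring_nf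
      linear_combination -hdd
    rw [inner_self_eq_zero, sub_eq_zero] at h
    exact h
  have hβSy : β • S y = y := by
    have h : ((starRingEnd ℂ) d * β) • S y = (starRingEnd ℂ) d • y := by rw [hB, hzy]
    rw [← smul_smul] at h
    have hd' : (starRingEnd ℂ) d ≠ 0 := fun hc => hd0 (by simpa using congrArg (starRingEnd ℂ) hc)
    exact smul_right_injective H hd' h
  have hSy : S y = β • y := by
    have h := congrArg S hβSy
    rw [map_smul, hSS] at h
    exact h.symm
  have hβ2 : β * β = 1 := by
    have h : y = (β * β) • y := by
      conv_lhs => rw [← hβSy, hSy, smul_smul]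
    have h2 : (β * β - 1) • y = 0 := by rw [sub_smul, ← h, one_smul, sub_self]
    rcases smul_eq_zero.mp h2 with h3 | h3
    · exact sub_eq_zero.mp h3
    · exact absurd h3 hy0
  refine ⟨β, mul_self_eq_one_iff.mp hβ2, hSy, ?_⟩
  ext w
  simp only [ContinuousLinearMap.coe_smul', Pi.smul_apply,
    ContinuousLinearMap.smulRight_apply, innerSL_apply_apply]
  rw [hT, hSy, smul_comm]
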